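/- Let L be a full lattice in a finite-dimensional real vector space V. A subspace W ⊆ V is L-generated if and only if the image of W under the quotient map V → V/L is closed (equivalently, compact). -/

import Mathlib

open Submodule

private theorem stmt4_compactSpace {V : Type*} [NormedAddCommGroup V] [NormedSpace ℝ V]
    [FiniteDimensional ℝ V] (L : AddSubgroup V) (b : Module.Basis (Fin (Module.finrank ℝ V)) ℝ V)
    (hb : ((span ℤ (Set.range b) : Submodule ℤ V) : Set V) = (L : Set V)) :
    CompactSpace (V ⧸ L) := by
  refine ⟨?_⟩
  have hK : IsCompact (closure (ZSpan.fundamentalDomain b)) :=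
    Metric.isCompact_of_isClosed_isBounded isClosed_closure
      (ZSpan.fundamentalDomain_isBounded b).closure
  have hsub : Set.univ ⊆ QuotientAddGroup.mk (s := L) '' closure (ZSpan.fundamentalDomain b) := by
    rintro x -
    obtain ⟨v, rfl⟩ := QuotientAddGroup.mk_surjective x
    refine ⟨ZSpan.fract b v, subset_closure (ZSpan.fract_mem_fundamentalDomain b v), ?_⟩
    rw [QuotientAddGroup.eq]
    have h2 : -ZSpan.fract b v + v = (ZSpan.floor b v : V) := by
      rw [ZSpan.fract_apply]; abel
    rw [h2, ← SetLike.mem_coe, ← hb]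
    exact SetLike.coe_mem _
  exact (hK.image continuous_quotient_mk').of_isClosed_subset isClosed_univ hsub

private theorem stmt4_forward {V : Type*} [NormedAddCommGroup V] [NormedSpace ℝ V]
    [FiniteDimensional ℝ V]
    (L : AddSubgroup V) (b : Module.Basis (Fin (Module.finrank ℝ V)) ℝ V)
    (hb : ((span ℤ (Set.range b) : Submodule ℤ V) : Set V) = (L : Set V))
    (W : Submodule ℝ V)
    (hspan : Submodule.span ℝ ((W : Set V) ∩ (L : Set V)) = W) :
    ∃ K : Set V, IsCompact K ∧
      (QuotientAddGroup.mk' L) '' (W : Set V) = (QuotientAddGroup.mk' L) '' K := by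
  classical
  set Lz : Submodule ℤ V := span ℤ (Set.range b) with hLz
  set M : Submodule ℤ W := ZLattice.comap ℝ Lz (W.subtype) with hM
  have hMcoe : (M : Set W) = (W.subtype) ⁻¹' (Lz : Set V) := ZLattice.coe_comap ℝ Lz W.subtype
  haveI : DiscreteTopology M :=
    ZLattice.comap_discreteTopology ℝ Lz continuous_subtype_val W.injective_subtype
  have hMtop : span ℝ (M : Set W) = ⊤ := by
    apply Submodule.map_injective_of_injective W.injective_subtype
    rw [Submodule.map_span, Submodule.map_top, Submodule.range_subtype, hMcoe]
    simp only [Submodule.coe_subtype, Set.image_preimage_eq_inter_range, Subtype.range_coe,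
      Subtype.range_val]
    have hr : (Set.range fun a : W => (a : V)) = (W : Set V) := Subtype.range_coe
    rw [hr, hb, Set.inter_comm]
    exact hspan
  haveI : IsZLattice ℝ M := ⟨hMtop⟩
  let c := Module.Free.chooseBasis ℤ M
  let bW := c.ofZLatticeBasis ℝ M
  refine ⟨W.subtype '' closure (ZSpan.fundamentalDomain bW), ?_, ?_⟩
  · exact (Metric.isCompact_of_isClosed_isBounded isClosed_closure
      (ZSpan.fundamentalDomain_isBounded bW).closure).image continuous_subtype_val
  · apply Set.Subset.antisymm
    · rintro _ ⟨w, hw, rfl⟩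
      set ww : W := ⟨w, hw⟩
      refine ⟨W.subtype (ZSpan.fract bW ww),
        ⟨ZSpan.fract bW ww, subset_closure (ZSpan.fract_mem_fundamentalDomain bW ww), rfl⟩, ?_⟩
      rw [QuotientAddGroup.mk'_apply, QuotientAddGroup.mk'_apply, QuotientAddGroup.eq]
      have hfl : ((ZSpan.floor bW ww : W)) ∈ M := by
        have h0 := SetLike.coe_mem (ZSpan.floor bW ww)
        exact (SetLike.ext_iff.mp (c.ofZLatticeBasis_span ℝ) _).mp h0
      have h2 : -(W.subtype (ZSpan.fract bW ww)) + w = W.subtype (ZSpan.floor bW ww) := by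
        have h3 : (ZSpan.fract bW ww : W) = ww - ZSpan.floor bW ww := ZSpan.fract_apply bW ww
        have h4 : W.subtype (ZSpan.fract bW ww) = w - W.subtype (ZSpan.floor bW ww) := by
          rw [h3]; rfl
        rw [h4]; abel
      rw [h2, ← SetLike.mem_coe, ← hb]
      rw [← SetLike.mem_coe, hMcoe] at hfl
      exact hfl
    · apply Set.image_mono
      rintro _ ⟨x, _, rfl⟩
      exact x.2

private theorem stmt4_bound {V : Type*} [NormedAddCommGroup V] [NormedSpace ℝ V]
    [FiniteDimensional ℝ V]
    (L : AddSubgroup V) [CompactSpace (V ⧸ L)] [T2Space (V ⧸ L)]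
    (W : Submodule ℝ V)
    (hclosed : IsClosed ((QuotientAddGroup.mk' L) '' (W : Set V))) :
    ∃ N : ℕ, ∀ w ∈ W, ∃ l ∈ (W : Set V) ∩ (L : Set V), ‖w - l‖ < N := by
  classical
  set H : AddSubgroup (V ⧸ L) := W.toAddSubgroup.map (QuotientAddGroup.mk' L) with hH
  have hHcoe : (H : Set (V ⧸ L)) = (QuotientAddGroup.mk' L) '' (W : Set V) := by
    rw [hH, AddSubgroup.coe_map]; rfl
  have hHcl : IsClosed (H : Set (V ⧸ L)) := hHcoe ▸ hclosed
  haveI : CompactSpace H := isCompact_iff_compactSpace.mp hHcl.isCompact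
  have hmem : ∀ w : W, (QuotientAddGroup.mk' L) (w : V) ∈ H := fun w =>
    ⟨(w : V), w.2, rfl⟩
  let f : W →+ H := AddMonoidHom.codRestrict
    ((QuotientAddGroup.mk' L).comp W.toAddSubgroup.subtype) H hmem
  have hfcont : Continuous f := Continuous.subtype_mk
    (continuous_quotient_mk'.comp continuous_subtype_val) _
  have hfsurj : Function.Surjective f := by
    rintro ⟨x, hx⟩
    rw [hH] at hx
    obtain ⟨w, hw, rfl⟩ := hx
    exact ⟨⟨w, hw⟩, rfl⟩
  have hopen : IsOpenMap f := f.isOpenMap_of_sigmaCompact hfsurj hfcont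
  have hcover : Set.univ ⊆ ⋃ n : ℕ, f '' Metric.ball 0 n := by
    rintro x -
    obtain ⟨w, rfl⟩ := hfsurj x
    exact Set.mem_iUnion.mpr ⟨⌊‖w‖⌋₊ + 1, ⟨w, by
      simpa using Nat.lt_floor_add_one ‖w‖, rfl⟩⟩
  obtain ⟨t, ht⟩ := isCompact_univ.elim_finite_subcover _
    (fun n : ℕ => hopen _ Metric.isOpen_ball) hcover
  refine ⟨t.sup id + 1, fun w hw => ?_⟩
  set ww : W := ⟨w, hw⟩
  obtain ⟨n, hn, v, hv, hfv⟩ := Set.mem_iUnion₂.mp (ht (Set.mem_univ (f ww)))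
  have hker : ((ww - v : W) : V) ∈ L := by
    have h1 : f (ww - v) = 0 := by rw [map_sub, hfv, sub_self]
    have h2 : ((ww - v : W) : V) ∈ (QuotientAddGroup.mk' L).ker :=
      AddMonoidHom.mem_ker.mpr (congrArg Subtype.val h1)
    rwa [QuotientAddGroup.ker_mk'] at h2
  refine ⟨((ww - v : W) : V), ⟨(ww - v : W).2, hker⟩, ?_⟩
  have h3 : w - ((ww - v : W) : V) = (v : V) := by
    push_cast
    abel
  rw [h3]
  have h4 : ‖(v : V)‖ < (n : ℝ) := mem_ball_zero_iff.mp hv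
  have h5 : (n : ℝ) ≤ (t.sup id : ℕ) := Nat.cast_le.mpr (Finset.le_sup (f := id) hn)
  push_cast
  linarith

private theorem stmt4_limit {V : Type*} [NormedAddCommGroup V] [NormedSpace ℝ V]
    [FiniteDimensional ℝ V]
    (L : AddSubgroup V) (W : Submodule ℝ V) (N : ℕ)
    (hN : ∀ w ∈ W, ∃ l ∈ (W : Set V) ∩ (L : Set V), ‖w - l‖ < N) :
    W ≤ span ℝ ((W : Set V) ∩ (L : Set V)) := by
  intro w hw
  set S := span ℝ ((W : Set V) ∩ (L : Set V)) with hS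
  have hSc : IsClosed (S : Set V) := S.closed_of_finiteDimensional
  have key : ∀ n : ℕ, ∃ x ∈ S, ‖w - x‖ ≤ N / (n + 1) := by
    intro n
    obtain ⟨l, hl, hnorm⟩ := hN ((n + 1 : ℕ) • w)
      (by exact AddSubgroup.nsmul_mem W.toAddSubgroup hw (n+1))
    refine ⟨((n : ℝ) + 1)⁻¹ • l, S.smul_mem _ (subset_span hl), ?_⟩
    have hpos : (0 : ℝ) < (n : ℝ) + 1 := by positivity
    have h1 : w - ((n : ℝ) + 1)⁻¹ • l = ((n : ℝ) + 1)⁻¹ • (((n : ℝ) + 1) • w - l) := by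
      rw [smul_sub, inv_smul_smul₀ hpos.ne']
    have h2 : ((n : ℝ) + 1) • w = (n + 1 : ℕ) • w := by
      rw [← Nat.cast_smul_eq_nsmul ℝ]
      push_cast
      ring_nf
    rw [h1, norm_smul, h2]
    rw [div_eq_inv_mul]
    have habs : ‖((n : ℝ) + 1)⁻¹‖ = ((n : ℝ) + 1)⁻¹ := by
      rw [Real.norm_eq_abs, abs_of_pos (by positivity)]
    rw [habs]
    gcongr
  rw [← SetLike.mem_coe, ← hSc.closure_eq]
  refine Metric.mem_closure_iff.mpr fun ε hε => ?_
  obtain ⟨n, hn⟩ := exists_nat_gt ((N : ℝ) / ε)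
  obtain ⟨x, hx, hnx⟩ := key n
  refine ⟨x, hx, ?_⟩
  rw [dist_eq_norm]
  have : (N : ℝ) / (n + 1) < ε := by
    rw [div_lt_iff₀ (by positivity)]
    rw [div_lt_iff₀ hε] at hn
    nlinarith [Nat.cast_nonneg (α := ℝ) N, hε]
  linarith

/-- For a full lattice L in a finite-dimensional real vector space V, a subspace W is
L-generated iff the image of W in the quotient torus V/L is closed. -/
theorem stmt_4 {V : Type*} [NormedAddCommGroup V] [NormedSpace ℝ V]
    [FiniteDimensional ℝ V] (L : AddSubgroup V)
    (hL : ∃ b : Module.Basis (Fin (Module.finrank ℝ V)) ℝ V,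
      AddSubgroup.closure (Set.range ⇑b) = L)
    (W : Submodule ℝ V) :
    Submodule.span ℝ ((W : Set V) ∩ (L : Set V)) = W ↔
      IsClosed ((QuotientAddGroup.mk' L) '' (W : Set V)) := by
  obtain ⟨b, hb⟩ := hL
  have hLset : ((span ℤ (Set.range b) : Submodule ℤ V) : Set V) = (L : Set V) := by
    rw [← hb, ← Submodule.span_int_eq_addSubgroupClosure]
    rfl
  have hLcl : IsClosed (L : Set V) := by
    rw [← hLset]
    exact AddSubgroup.isClosed_of_discrete (H := (span ℤ (Set.range b)).toAddSubgroup)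
  haveI : IsClosed (L : Set (V)) := hLcl
  haveI : T3Space (V ⧸ L) := QuotientAddGroup.instT3Space L
  haveI : CompactSpace (V ⧸ L) := stmt4_compactSpace L b hLset
  constructor
  · intro hspan
    obtain ⟨K, hK, hKeq⟩ := stmt4_forward L b hLset W hspan
    rw [hKeq]
    exact (hK.image (continuous_quotient_mk')).isClosed
  · intro hclosed
    obtain ⟨N, hN⟩ := stmt4_bound L W hclosed
    exact le_antisymm (span_le.mpr Set.inter_subset_left) (stmt4_limit L W N hN)
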